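/- Let N ∈ ℕ, N ≥ 1, and set λ = −N. Then L₁ ω_N = 0 and L_{−1} ω_{−N} = 0, and consequently the (2N+1)-dimensional complex span of {ω_m : |m| ≤ N} is invariant under each of the operators L₁, L₀ and L_{−1} (so together they realise the finite-dimensional λ-Poincaré algebra). -/

import Mathlib

/-- Partial derivative in the first (radial) variable. -/
noncomputable def pr (f : ℝ × ℝ → ℂ) : ℝ × ℝ → ℂ :=
  fun p => deriv (fun s : ℝ => f (s, p.2)) p.1

/-- Partial derivative in the second (angular) variable. -/
noncomputable def pphi (f : ℝ × ℝ → ℂ) : ℝ × ℝ → ℂ :=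
  fun p => deriv (fun t : ℝ => f (p.1, t)) p.2

/-- The super-rotation operator `L_n = i e^{inφ}(∂_φ - i n r ∂_r)`. -/
noncomputable def Lop (n : ℤ) (f : ℝ × ℝ → ℂ) : ℝ × ℝ → ℂ :=
  fun p => Complex.I * Complex.exp (Complex.I * n * p.2) *
    (pphi f p - Complex.I * n * (p.1 : ℂ) * pr f p)

/-- The super-translation function `ω_m(r,φ) = r^{-λ} e^{imφ}`. -/
noncomputable def ω (lam : ℝ) (m : ℤ) : ℝ × ℝ → ℂ :=
  fun p => (p.1 : ℂ) ^ (-(lam : ℂ)) * Complex.exp (Complex.I * m * p.2)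

lemma omega_eq (N : ℕ) (m : ℤ) :
    ω (-(N : ℝ)) m = fun p => (p.1 : ℂ) ^ N * Complex.exp (Complex.I * m * p.2) := by
  funext p
  simp only [ω]
  congr 1
  rw [show -(((-(N : ℝ)) : ℝ) : ℂ) = ((N : ℕ) : ℂ) by push_cast; ring]
  exact Complex.cpow_natCast _ _

lemma hasDeriv_r (N : ℕ) (m : ℤ) (r : ℝ) (φ : ℝ) :
    HasDerivAt (fun s : ℝ => (s : ℂ) ^ N * Complex.exp (Complex.I * m * φ))
      ((N : ℂ) * (r : ℂ) ^ (N - 1) * Complex.exp (Complex.I * m * φ)) r := by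
  have h : HasDerivAt (fun z : ℂ => z ^ N) ((N : ℂ) * (r : ℂ) ^ (N - 1)) (r : ℂ) :=
    hasDerivAt_pow N _
  exact h.comp_ofReal.mul_const _

lemma hasDeriv_phi (N : ℕ) (m : ℤ) (r : ℝ) (φ : ℝ) :
    HasDerivAt (fun t : ℝ => (r : ℂ) ^ N * Complex.exp (Complex.I * m * t))
      ((r : ℂ) ^ N * (Complex.exp (Complex.I * m * φ) * (Complex.I * m))) φ := by
  have h1 : HasDerivAt (fun z : ℂ => Complex.I * m * z) (Complex.I * m) (φ : ℂ) := by
    simpa using (hasDerivAt_id (φ : ℂ)).const_mul (Complex.I * m)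
  have h2 := h1.cexp
  exact (h2.comp_ofReal).const_mul _

lemma lop_omega (N : ℕ) (hN : 1 ≤ N) (n m : ℤ) :
    Lop n (ω (-(N : ℝ)) m) = ((n * N - m : ℤ) : ℂ) • ω (-(N : ℝ)) (n + m) := by
  rw [omega_eq, omega_eq]
  funext p
  simp only [Lop, pr, pphi, Pi.smul_apply, smul_eq_mul]
  rw [show (deriv (fun s : ℝ => (s : ℂ) ^ N * Complex.exp (Complex.I * m * p.2)) p.1)
      = (N : ℂ) * (p.1 : ℂ) ^ (N - 1) * Complex.exp (Complex.I * m * p.2) from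
      (hasDeriv_r N m p.1 p.2).deriv,
    show (deriv (fun t : ℝ => (p.1 : ℂ) ^ N * Complex.exp (Complex.I * m * t)) p.2)
      = (p.1 : ℂ) ^ N * (Complex.exp (Complex.I * m * p.2) * (Complex.I * m)) from
      (hasDeriv_phi N m p.1 p.2).deriv]
  have hr : (p.1 : ℂ) ^ N = (p.1 : ℂ) * (p.1 : ℂ) ^ (N - 1) := by
    conv_lhs => rw [show N = (N - 1) + 1 from (Nat.succ_pred_eq_of_pos hN).symm]
    ring
  have he : Complex.exp (Complex.I * (n + m : ℤ) * p.2)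
      = Complex.exp (Complex.I * n * p.2) * Complex.exp (Complex.I * m * p.2) := by
    rw [← Complex.exp_add]; push_cast; ring_nf
  rw [hr, he]
  push_cast
  linear_combination ((m : ℂ) - n * N) * (p.1 : ℂ) * (p.1 : ℂ) ^ (N - 1) *
    Complex.exp (Complex.I * n * p.2) * Complex.exp (Complex.I * m * p.2) * Complex.I_sq

/-- niceness: differentiable in each variable everywhere -/
def Nice (f : ℝ × ℝ → ℂ) : Prop :=
  ∀ p : ℝ × ℝ, DifferentiableAt ℝ (fun s : ℝ => f (s, p.2)) p.1 ∧
    DifferentiableAt ℝ (fun t : ℝ => f (p.1, t)) p.2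

lemma nice_omega (N : ℕ) (m : ℤ) : Nice (ω (-(N : ℝ)) m) := by
  rw [omega_eq]
  intro p
  exact ⟨(hasDeriv_r N m p.1 p.2).differentiableAt,
    (hasDeriv_phi N m p.1 p.2).differentiableAt⟩

lemma nice_add {f g : ℝ × ℝ → ℂ} (hf : Nice f) (hg : Nice g) : Nice (f + g) := by
  intro p
  exact ⟨((hf p).1).add ((hg p).1), ((hf p).2).add ((hg p).2)⟩

lemma nice_smul {f : ℝ × ℝ → ℂ} (c : ℂ) (hf : Nice f) : Nice (c • f) := by
  intro p
  exact ⟨((hf p).1).const_smul c, ((hf p).2).const_smul c⟩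

lemma lop_add {f g : ℝ × ℝ → ℂ} (hf : Nice f) (hg : Nice g) (k : ℤ) :
    Lop k (f + g) = Lop k f + Lop k g := by
  funext p
  simp only [Lop, pr, pphi, Pi.add_apply]
  rw [deriv_fun_add (hf p).1 (hg p).1, deriv_fun_add (hf p).2 (hg p).2]
  ring

lemma lop_smul (f : ℝ × ℝ → ℂ) (c : ℂ) (k : ℤ) :
    Lop k (c • f) = c • Lop k f := by
  funext p
  simp only [Lop, pr, pphi, Pi.smul_apply, smul_eq_mul]
  rw [deriv_const_mul_field, deriv_const_mul_field]
  ring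

lemma lop_zero (k : ℤ) : Lop k (0 : ℝ × ℝ → ℂ) = 0 := by
  funext p
  simp [Lop, pr, pphi]

/-- Let `N ≥ 1` and `λ = -N`.  Then `L₁ ω_N = 0` and `L₋₁ ω_{-N} = 0`, and the
`(2N+1)`-dimensional complex span of `{ω_m : |m| ≤ N}` is invariant under each
of `L₁`, `L₀` and `L₋₁` (the finite-dimensional λ-Poincaré algebra). -/
theorem lambda_poincare_finite_representation (N : ℕ) (hN : 1 ≤ N) :
    (∀ p : ℝ × ℝ, 0 < p.1 → Lop 1 (ω (-(N : ℝ)) (N : ℤ)) p = 0) ∧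
    (∀ p : ℝ × ℝ, 0 < p.1 → Lop (-1) (ω (-(N : ℝ)) (-(N : ℤ))) p = 0) ∧
    (∀ f ∈ Submodule.span ℂ
        {g : ℝ × ℝ → ℂ | ∃ m : ℤ, |m| ≤ (N : ℤ) ∧ g = ω (-(N : ℝ)) m},
      ∀ k ∈ ({-1, 0, 1} : Set ℤ),
        Lop k f ∈ Submodule.span ℂ
          {g : ℝ × ℝ → ℂ | ∃ m : ℤ, |m| ≤ (N : ℤ) ∧ g = ω (-(N : ℝ)) m}) := by
  set S := {g : ℝ × ℝ → ℂ | ∃ m : ℤ, |m| ≤ (N : ℤ) ∧ g = ω (-(N : ℝ)) m} with hS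
  refine ⟨?_, ?_, ?_⟩
  · intro p _
    rw [lop_omega N hN 1 N]
    simp
  · intro p _
    rw [lop_omega N hN (-1) (-(N : ℤ))]
    simp
  · -- key: for a generator and k ∈ {-1,0,1}, Lop k stays in the span
    have key : ∀ (m : ℤ), |m| ≤ (N : ℤ) → ∀ k ∈ ({-1, 0, 1} : Set ℤ),
        Lop k (ω (-(N : ℝ)) m) ∈ Submodule.span ℂ S := by
      intro m hm k hk
      rw [lop_omega N hN k m]
      by_cases h : |k + m| ≤ (N : ℤ)
      · exact Submodule.smul_mem _ _ (Submodule.subset_span ⟨k + m, h, rfl⟩)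
      · have hk' : k = -1 ∨ k = 0 ∨ k = 1 := by
          simpa [Set.mem_insert_iff] using hk
        have hcoef : k * (N : ℤ) - m = 0 := by
          rw [abs_le] at hm
          rw [abs_le] at h
          rcases hk' with rfl | rfl | rfl <;> omega
        rw [hcoef]
        simp
    intro f hf
    refine Submodule.span_induction (p := fun f _ => Nice f ∧
        ∀ k ∈ ({-1, 0, 1} : Set ℤ), Lop k f ∈ Submodule.span ℂ S)
      ?_ ?_ ?_ ?_ hf |>.2
    · rintro g ⟨m, hm, rfl⟩
      exact ⟨nice_omega N m, key m hm⟩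
    · refine ⟨fun p => ⟨differentiableAt_const 0, differentiableAt_const 0⟩, ?_⟩
      intro k _
      rw [show (0 : ℝ × ℝ → ℂ) = (0 : ℝ × ℝ → ℂ) from rfl, lop_zero]
      exact Submodule.zero_mem _
    · rintro g h _ _ ⟨hng, hg⟩ ⟨hnh, hh⟩
      refine ⟨nice_add hng hnh, fun k hk => ?_⟩
      rw [lop_add hng hnh k]
      exact Submodule.add_mem _ (hg k hk) (hh k hk)
    · rintro c g _ ⟨hng, hg⟩
      refine ⟨nice_smul c hng, fun k hk => ?_⟩
      rw [lop_smul g c k]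
      exact Submodule.smul_mem _ _ (hg k hk)
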